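/- arXiv:2410.08380 — 4 statements merged into one kernel-verified Lean document; each statement's English description precedes it below -/
import Mathlib

section
/- Let G = (V,E) be a d-regular graph on n vertices and set λ = λ(G). Then the hopping forcing number satisfies H(G) ≥ max(1 − 2λ/d, (d−λ)/(d+3λ)) · n, equivalently H(G) ≥ (1 − min(2λ/d, 4λ/(d+3λ))) · n. -/
open scoped Classical
open Matrix

/-- One step of the (sequential) hopping forcing process on a graph `G`.  A state is a pair
`(B, H)` where `B` is the current set of blue vertices and `H` is the set of vertices that
have already performed a hop.  In one step a blue vertex `v ∈ B` that has not hopped yet and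
all of whose neighbours are blue colours a white vertex `w` at distance exactly two blue. -/
def HopStep {V : Type*} [DecidableEq V] (G : SimpleGraph V) :
    Finset V × Finset V → Finset V × Finset V → Prop := fun p q =>
  ∃ v w, v ∈ p.1 ∧ v ∉ p.2 ∧ (∀ u, G.Adj v u → u ∈ p.1) ∧ w ∉ p.1 ∧
    G.dist v w = 2 ∧ q = (insert w p.1, insert v p.2)

/-- `B` is a feasible initial set of blue vertices: some hopping forcing process starting
from `B` ends with every vertex blue. -/
def HopFeasible {V : Type*} [Fintype V] [DecidableEq V] (G : SimpleGraph V)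
    (B : Finset V) : Prop :=
  ∃ H : Finset V, Relation.ReflTransGen (HopStep G) (B, ∅) (Finset.univ, H)

/-- The hopping forcing number of `G`: the minimum size of a feasible initial blue set. -/
noncomputable def hopNumber {V : Type*} [Fintype V] [DecidableEq V] (G : SimpleGraph V) : ℕ :=
  sInf {k | ∃ B : Finset V, B.card = k ∧ HopFeasible G B}

/-- The probability, under the uniform distribution over all `d`-regular simple graphs on
the labelled vertex set `Fin n`, that the random graph satisfies the property `P`. -/
noncomputable def regProb (n d : ℕ) (P : SimpleGraph (Fin n) → Prop) : ℝ :=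
  (Nat.card {G : SimpleGraph (Fin n) // G.IsRegularOfDegree d ∧ P G} : ℝ) /
    (Nat.card {G : SimpleGraph (Fin n) // G.IsRegularOfDegree d} : ℝ)

/-- The adjacency matrix of a graph is Hermitian over `ℝ`. -/
lemma adjMatrix_isHermitian {n : ℕ} (G : SimpleGraph (Fin n)) [DecidableRel G.Adj] :
    (SimpleGraph.adjMatrix ℝ G).IsHermitian := by
  ext i j
  simp [Matrix.conjTranspose_apply, SimpleGraph.adj_comm]

/-- `graphLambda G` is `λ(G) = max (|λ₂|, |λₙ|)`, where
`λ₁ ≥ λ₂ ≥ ⋯ ≥ λₙ` are the eigenvalues of the adjacency matrix of `G`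
(it is junk, namely `0`, if `G` has fewer than two vertices). -/
noncomputable def graphLambda {n : ℕ} (G : SimpleGraph (Fin n)) : ℝ :=
  if h : 2 ≤ n then
    -- eigenvalues sorted in nondecreasing order
    let e : Fin n → ℝ :=
      (adjMatrix_isHermitian G).eigenvalues ∘ Tuple.sort (adjMatrix_isHermitian G).eigenvalues
    max |e ⟨n - 2, by omega⟩| |e ⟨0, by omega⟩|
  else 0

lemma hop_chain_struct {V : Type*} [Fintype V] [DecidableEq V] (G : SimpleGraph V)
    {E : Finset V} {p : Finset V × Finset V}
    (h : Relation.ReflTransGen (HopStep G) p (Finset.univ, E)) :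
    ∃ k : ℕ, p.1.card + k = Fintype.card V ∧ ∃ v u : Fin k → V,
      (∀ i j : Fin k, i ≤ j → ¬ G.Adj (v i) (u j) ∧ v i ≠ u j) ∧
      Function.Injective v ∧ Function.Injective u ∧
      (∀ j, u j ∉ p.1) ∧ (∀ i, v i ∉ p.2) := by
  induction h using Relation.ReflTransGen.head_induction_on with
  | refl =>
      exact ⟨0, by simp, Fin.elim0, Fin.elim0, fun i => i.elim0, fun i => i.elim0,
        fun i => i.elim0, fun i => i.elim0, fun i => i.elim0⟩
  | @head a c hstep _ ih =>
      obtain ⟨v₀, w₀, hv₀C, hv₀D, hN, hw₀C, hdist, rfl⟩ := hstep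
      obtain ⟨k, hk, v, u, hpair, hvinj, huinj, huC, hvD⟩ := ih
      simp only [Finset.card_insert_of_notMem hw₀C] at hk
      refine ⟨k + 1, by omega, Fin.cons v₀ v, Fin.cons w₀ u, ?_, ?_, ?_, ?_, ?_⟩
      · intro i j hij
        rcases Fin.eq_zero_or_eq_succ i with rfl | ⟨i', rfl⟩ <;>
          rcases Fin.eq_zero_or_eq_succ j with rfl | ⟨j', rfl⟩
        · simp only [Fin.cons_zero]
          constructor
          · intro hadj
            have := (SimpleGraph.dist_eq_one_iff_adj (G := G)).2 hadj
            omega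
          · rintro rfl; exact hw₀C hv₀C
        · simp only [Fin.cons_zero, Fin.cons_succ]
          have hj : u j' ∉ a.1 := fun hh => huC j' (Finset.mem_insert_of_mem hh)
          exact ⟨fun hadj => hj (hN _ hadj), fun hh => hj (hh ▸ hv₀C)⟩
        · have h0 := Fin.le_def.mp hij
          simp only [Fin.val_succ, Fin.val_zero] at h0
          omega
        · exact hpair i' j' (Fin.succ_le_succ_iff.mp hij)
      · refine Fin.cons_injective_of_injective ?_ hvinj
        rintro ⟨i, hi⟩
        exact hvD i (hi ▸ Finset.mem_insert_self _ _)
      · refine Fin.cons_injective_of_injective ?_ huinj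
        rintro ⟨j, hj⟩
        exact huC j (hj ▸ Finset.mem_insert_self _ _)
      · intro j
        rcases Fin.eq_zero_or_eq_succ j with rfl | ⟨j', rfl⟩
        · simpa using hw₀C
        · simp only [Fin.cons_succ]
          exact fun hh => huC j' (Finset.mem_insert_of_mem hh)
      · intro i
        rcases Fin.eq_zero_or_eq_succ i with rfl | ⟨i', rfl⟩
        · simpa using hv₀D
        · simp only [Fin.cons_succ]
          exact fun hh => hvD i' (Finset.mem_insert_of_mem hh)


section EML
variable {n d : ℕ} (G : SimpleGraph (Fin n))

lemma graphLambda_nonneg (hn : 2 ≤ n) : 0 ≤ graphLambda G := by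
  rw [graphLambda, dif_pos hn]
  exact le_trans (abs_nonneg _) (le_max_left _ _)

lemma eml_arith (dd ss tt nn ll : ℝ) (hnn : 0 < nn) (hss : 0 ≤ ss) (htt : 0 ≤ tt)
    (hsn : ss ≤ nn) (htn : tt ≤ nn)
    (h : (-(dd * ss * tt / nn)) ^ 2 ≤ ll ^ 2 * (ss - ss ^ 2 / nn) * (tt - tt ^ 2 / nn)) :
    dd ^ 2 * ss * tt ≤ ll ^ 2 * (nn - ss) * (nn - tt) := by
  have hne : nn ≠ 0 := ne_of_gt hnn
  have h' : dd ^ 2 * ss ^ 2 * tt ^ 2 ≤ ll ^ 2 * (ss * (nn - ss)) * (tt * (nn - tt)) := by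
    have e1 : (-(dd * ss * tt / nn)) ^ 2 = dd ^ 2 * ss ^ 2 * tt ^ 2 / nn ^ 2 := by
      field_simp
    have e2 : ll ^ 2 * (ss - ss ^ 2 / nn) * (tt - tt ^ 2 / nn)
        = ll ^ 2 * (ss * (nn - ss)) * (tt * (nn - tt)) / nn ^ 2 := by
      field_simp
    rw [e1, e2] at h
    have h2 := mul_le_mul_of_nonneg_right h (le_of_lt (by positivity : (0:ℝ) < nn ^ 2))
    calc dd ^ 2 * ss ^ 2 * tt ^ 2 = dd ^ 2 * ss ^ 2 * tt ^ 2 / nn ^ 2 * nn ^ 2 := by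
          field_simp
      _ ≤ ll ^ 2 * (ss * (nn - ss)) * (tt * (nn - tt)) / nn ^ 2 * nn ^ 2 := h2
      _ = ll ^ 2 * (ss * (nn - ss)) * (tt * (nn - tt)) := by field_simp
  rcases hss.lt_or_eq with hs' | hs'
  · rcases htt.lt_or_eq with ht' | ht'
    · nlinarith [h', mul_pos hs' ht']
    · rw [← ht']
      have h9 : (0:ℝ) ≤ ll ^ 2 * (nn - ss) * (nn - 0) :=
        mul_nonneg (mul_nonneg (sq_nonneg _) (by linarith)) (by linarith)
      nlinarith [h9]
  · rw [← hs']
    have h9 : (0:ℝ) ≤ ll ^ 2 * (nn - 0) * (nn - tt) :=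
      mul_nonneg (mul_nonneg (sq_nonneg _) (by linarith)) (by linarith)
    nlinarith [h9]

set_option maxHeartbeats 1000000 in
lemma eml (hn : 2 ≤ n) (hreg : G.IsRegularOfDegree d)
    (hl : graphLambda G < d) (S T : Finset (Fin n))
    (hE : ∀ s ∈ S, ∀ t ∈ T, ¬ G.Adj s t) :
    (d : ℝ) ^ 2 * S.card * T.card ≤
      (graphLambda G) ^ 2 * ((n : ℝ) - S.card) * ((n : ℝ) - T.card) := by
  have hnR : (0:ℝ) < n := by
    have : 0 < n := by omega
    exact_mod_cast this
  set lam := graphLambda G with hlamdef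
  have hlam0 : 0 ≤ lam := graphLambda_nonneg G hn
  set A := SimpleGraph.adjMatrix ℝ G with hAdef
  have hA : A.IsHermitian := adjMatrix_isHermitian G
  set ev : Fin n → ℝ := hA.eigenvalues with hevdef
  set Vm : Matrix (Fin n) (Fin n) ℝ := (hA.eigenvectorUnitary : Matrix (Fin n) (Fin n) ℝ) with hVmdef
  have hstar : star Vm = Vmᵀ := by
    rw [Matrix.star_eq_conjTranspose]
    ext i j
    simp [Matrix.conjTranspose_apply]
  have hVVt : Vm * Vmᵀ = 1 := by
    have := (Matrix.mem_unitaryGroup_iff).mp hA.eigenvectorUnitary.2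
    rwa [hstar] at this
  have hVtV : Vmᵀ * Vm = 1 := by
    have := (Matrix.mem_unitaryGroup_iff').mp hA.eigenvectorUnitary.2
    rwa [hstar] at this
  have hspec : A = Vm * Matrix.diagonal ev * Vmᵀ := by
    have h := hA.spectral_theorem
    rwa [Unitary.conjStarAlgAut_apply, ← hVmdef, hstar, show RCLike.ofReal ∘ ev = ev by ext; simp] at h
  have hsymm : Aᵀ = A := by
    ext i j
    simp only [Matrix.transpose_apply, hAdef, SimpleGraph.adjMatrix_apply]
    rw [SimpleGraph.adj_comm]
  -- bilinear diagonalization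
  have hdotid : ∀ x y : Fin n → ℝ,
      x ⬝ᵥ (A *ᵥ y) = ∑ j, (ev j * (Vmᵀ *ᵥ x) j) * (Vmᵀ *ᵥ y) j := by
    intro x y
    conv_lhs => rw [hspec, ← Matrix.mulVec_mulVec, ← Matrix.mulVec_mulVec,
      Matrix.dotProduct_mulVec, ← Matrix.mulVec_transpose]
    rw [dotProduct]
    refine Finset.sum_congr rfl fun j _ => ?_
    rw [Matrix.mulVec_diagonal]
    ring
  have hpres : ∀ x y : Fin n → ℝ, (Vmᵀ *ᵥ x) ⬝ᵥ (Vmᵀ *ᵥ y) = x ⬝ᵥ y := by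
    intro x y
    rw [Matrix.mulVec_transpose, ← Matrix.dotProduct_mulVec, Matrix.mulVec_mulVec, hVVt,
      Matrix.one_mulVec]
  set ones : Fin n → ℝ := fun _ => 1 with honesdef
  have hones : A *ᵥ ones = (d : ℝ) • ones := by
    funext i
    simp only [hAdef, honesdef, SimpleGraph.adjMatrix_mulVec_apply, Pi.smul_apply,
      smul_eq_mul, mul_one, Finset.sum_const, nsmul_eq_mul]
    exact_mod_cast congrArg (Nat.cast : ℕ → ℝ) (hreg i)
  set c : Fin n → ℝ := Vmᵀ *ᵥ ones with hcdef
  have hDc : ∀ j, ev j * c j = (d : ℝ) * c j := by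
    have h1 : Vm *ᵥ (Matrix.diagonal ev *ᵥ c) = (d : ℝ) • ones := by
      rw [← hones]
      conv_rhs => rw [hspec]
      rw [← Matrix.mulVec_mulVec, ← Matrix.mulVec_mulVec]
    have h2 : Matrix.diagonal ev *ᵥ c = (d : ℝ) • c := by
      have h3 := congrArg (fun z => Vmᵀ *ᵥ z) h1
      simpa [Matrix.mulVec_mulVec, ← Matrix.mul_assoc, hVtV, Matrix.one_mulVec,
        Matrix.mulVec_smul, ← hcdef] using h3
    intro j
    have := congrFun h2 j
    simpa [Matrix.mulVec_diagonal] using this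
  have hcc : c ⬝ᵥ c = (n : ℝ) := by
    rw [hcdef, hpres]
    simp [dotProduct, honesdef]
  have hcne : ∃ j₀, c j₀ ≠ 0 := by
    by_contra h
    push_neg at h
    have : c ⬝ᵥ c = 0 := by
      simp [dotProduct]
      exact Finset.sum_eq_zero fun j _ => by rw [h j, mul_zero]
    rw [hcc] at this
    linarith
  obtain ⟨j₀, hj₀⟩ := hcne
  have hevj₀ : ev j₀ = (d : ℝ) := mul_right_cancel₀ hj₀ (hDc j₀)
  -- sorted eigenvalue facts
  set σ := Tuple.sort ev with hσdef
  set es : Fin n → ℝ := ev ∘ σ with hesdef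
  have hmono : Monotone es := Tuple.monotone_sort ev
  have hlam_eq : lam = max |es ⟨n - 2, by omega⟩| |es ⟨0, by omega⟩| := by
    rw [hlamdef, graphLambda, dif_pos hn]
  have hes_eq : ∀ jj : Fin n, es (σ.symm jj) = ev jj := fun jj => by
    simp [hesdef]
  have htop : ∀ j : Fin n, ev j = (d:ℝ) → σ.symm j = ⟨n - 1, by omega⟩ := by
    intro j hj
    by_contra hne
    have hlt : (σ.symm j).val ≤ n - 2 := by
      have h1 := (σ.symm j).isLt
      have h2 : (σ.symm j).val ≠ n - 1 := fun h => hne (Fin.ext h)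
      omega
    have h3 : (d:ℝ) ≤ es ⟨n - 2, by omega⟩ := by
      have h4 : σ.symm j ≤ (⟨n - 2, by omega⟩ : Fin n) := hlt
      have h5 := hmono h4
      rwa [show es (σ.symm j) = (d:ℝ) from (hes_eq j).trans hj] at h5
    have h6 : (d:ℝ) ≤ lam := by
      rw [hlam_eq]
      exact le_trans (le_trans h3 (le_abs_self _)) (le_max_left _ _)
    linarith
  have hbound : ∀ j : Fin n, j ≠ j₀ → |ev j| ≤ lam := by
    intro j hj
    have hkle : (σ.symm j).val ≤ n - 2 := by
      have h1 := (σ.symm j).isLt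
      have h2 : σ.symm j ≠ ⟨n - 1, by omega⟩ := by
        intro h
        exact hj (σ.symm.injective (h.trans (htop j₀ hevj₀).symm))
      have h3 : (σ.symm j).val ≠ n - 1 := fun h => h2 (Fin.ext h)
      omega
    have hev_es : ev j = es (σ.symm j) := (hes_eq j).symm
    have h1 : ev j ≤ es ⟨n - 2, by omega⟩ := by
      rw [hev_es]; exact hmono (show σ.symm j ≤ (⟨n - 2, by omega⟩ : Fin n) from hkle)
    have h2 : es ⟨0, by omega⟩ ≤ ev j := by
      rw [hev_es]; exact hmono (show (⟨0, by omega⟩ : Fin n) ≤ σ.symm j from Nat.zero_le _)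
    rw [abs_le]
    constructor
    · have := neg_abs_le (es (⟨0, by omega⟩ : Fin n))
      have h4 : |es (⟨0, by omega⟩ : Fin n)| ≤ lam := by rw [hlam_eq]; exact le_max_right _ _
      linarith
    · have := le_abs_self (es (⟨n - 2, by omega⟩ : Fin n))
      have h4 : |es (⟨n - 2, by omega⟩ : Fin n)| ≤ lam := by rw [hlam_eq]; exact le_max_left _ _
      linarith
  have hcz : ∀ j, j ≠ j₀ → c j = 0 := by
    intro j hj
    by_contra hcj
    have h1 : ev j = (d : ℝ) := mul_right_cancel₀ hcj (hDc j)
    have h2 := hbound j hj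
    rw [h1] at h2
    rw [abs_of_nonneg (Nat.cast_nonneg d)] at h2
    linarith
  have hpz : ∀ x : Fin n → ℝ, x ⬝ᵥ ones = 0 → (Vmᵀ *ᵥ x) j₀ = 0 := by
    intro x hx
    have h0 : (Vmᵀ *ᵥ x) ⬝ᵥ c = 0 := by rw [hcdef, hpres]; exact hx
    rw [dotProduct] at h0
    rw [Finset.sum_eq_single j₀ (fun b _ hb => by rw [hcz b hb, mul_zero]) (by simp)] at h0
    exact (mul_eq_zero.mp h0).resolve_right hj₀
  -- key bilinear bound
  have key : ∀ x y : Fin n → ℝ, x ⬝ᵥ ones = 0 → y ⬝ᵥ ones = 0 →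
      (x ⬝ᵥ (A *ᵥ y)) ^ 2 ≤ lam ^ 2 * (x ⬝ᵥ x) * (y ⬝ᵥ y) := by
    intro x y hx hy
    set p := Vmᵀ *ᵥ x with hp
    set q := Vmᵀ *ᵥ y with hq
    have hpj₀ : p j₀ = 0 := hpz x hx
    have hsum : x ⬝ᵥ (A *ᵥ y) = ∑ j ∈ Finset.univ.erase j₀, (ev j * p j) * q j := by
      rw [hdotid]
      exact (Finset.sum_erase (f := fun j => ev j * p j * q j) (a := j₀) Finset.univ (show ev j₀ * p j₀ * q j₀ = 0 by rw [hpj₀]; ring)).symm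
    have hCS := Finset.sum_mul_sq_le_sq_mul_sq (Finset.univ.erase j₀)
      (fun j => ev j * p j) q
    have hxx : ∑ j, p j ^ 2 = x ⬝ᵥ x := by
      rw [← hpres x x]
      rw [dotProduct]
      exact Finset.sum_congr rfl fun j _ => by ring
    have hyy : ∑ j, q j ^ 2 = y ⬝ᵥ y := by
      rw [← hpres y y]
      rw [dotProduct]
      exact Finset.sum_congr rfl fun j _ => by ring
    have h1 : ∑ j ∈ Finset.univ.erase j₀, (ev j * p j) ^ 2 ≤ lam ^ 2 * (x ⬝ᵥ x) := by
      calc ∑ j ∈ Finset.univ.erase j₀, (ev j * p j) ^ 2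
          ≤ ∑ j ∈ Finset.univ.erase j₀, lam ^ 2 * p j ^ 2 := by
            refine Finset.sum_le_sum fun j hj => ?_
            have hb := hbound j (Finset.ne_of_mem_erase hj)
            have h2 : ev j ^ 2 ≤ lam ^ 2 := by
              nlinarith [le_abs_self (ev j), neg_abs_le (ev j), sq_nonneg (ev j)]
            nlinarith [sq_nonneg (p j)]
        _ ≤ ∑ j, lam ^ 2 * p j ^ 2 := by
            refine Finset.sum_le_sum_of_subset_of_nonneg (Finset.erase_subset _ _) ?_
            intro j _ _
            exact mul_nonneg (sq_nonneg _) (sq_nonneg _)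
        _ = lam ^ 2 * (x ⬝ᵥ x) := by rw [← Finset.mul_sum, hxx]
    have h2 : ∑ j ∈ Finset.univ.erase j₀, q j ^ 2 ≤ y ⬝ᵥ y := by
      rw [← hyy]
      refine Finset.sum_le_sum_of_subset_of_nonneg (Finset.erase_subset _ _) ?_
      intro j _ _
      exact sq_nonneg _
    have h3 : (0:ℝ) ≤ ∑ j ∈ Finset.univ.erase j₀, q j ^ 2 :=
      Finset.sum_nonneg fun j _ => sq_nonneg _
    have h4 : (0:ℝ) ≤ lam ^ 2 * (x ⬝ᵥ x) := by
      rw [← hxx]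
      exact mul_nonneg (sq_nonneg _) (Finset.sum_nonneg fun j _ => sq_nonneg _)
    calc (x ⬝ᵥ (A *ᵥ y)) ^ 2
        = (∑ j ∈ Finset.univ.erase j₀, (ev j * p j) * q j) ^ 2 := by rw [hsum]
      _ ≤ (∑ j ∈ Finset.univ.erase j₀, (ev j * p j) ^ 2) *
            (∑ j ∈ Finset.univ.erase j₀, q j ^ 2) := hCS
      _ ≤ (lam ^ 2 * (x ⬝ᵥ x)) * (y ⬝ᵥ y) := by
          apply mul_le_mul h1 h2 h3 h4
      _ = lam ^ 2 * (x ⬝ᵥ x) * (y ⬝ᵥ y) := by ring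
  -- indicator vectors
  set s : ℝ := (S.card : ℝ) with hsdef
  set t : ℝ := (T.card : ℝ) with htdef
  have hs0 : 0 ≤ s := Nat.cast_nonneg _
  have ht0 : 0 ≤ t := Nat.cast_nonneg _
  have hsn : s ≤ n := by
    rw [hsdef]
    exact_mod_cast (Finset.card_le_univ S).trans_eq (by simp)
  have htn : t ≤ n := by
    rw [htdef]
    exact_mod_cast (Finset.card_le_univ T).trans_eq (by simp)
  set indS : Fin n → ℝ := fun i => if i ∈ S then 1 else 0 with hindS
  set indT : Fin n → ℝ := fun i => if i ∈ T then 1 else 0 with hindT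
  have hSones : indS ⬝ᵥ ones = s := by
    simp [dotProduct, hindS, honesdef, hsdef]
  have hTones : indT ⬝ᵥ ones = t := by
    simp [dotProduct, hindT, honesdef, htdef]
  have honesones : ones ⬝ᵥ ones = (n:ℝ) := by
    simp [dotProduct, honesdef]
  have hSS : indS ⬝ᵥ indS = s := by
    simp [dotProduct, hindS, hsdef, ite_and]
  have hTT : indT ⬝ᵥ indT = t := by
    simp [dotProduct, hindT, htdef, ite_and]
  have hAST : indS ⬝ᵥ (A *ᵥ indT) = 0 := by
    rw [dotProduct]
    refine Finset.sum_eq_zero fun i _ => ?_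
    by_cases hi : i ∈ S
    · rw [Matrix.mulVec, dotProduct]
      rw [Finset.sum_eq_zero, mul_zero]
      intro j _
      by_cases hj : j ∈ T
      · have : A i j = 0 := by
          simp [hAdef, SimpleGraph.adjMatrix_apply, hE i hi j hj]
        rw [this, zero_mul]
      · simp [hindT, hj]
    · simp [hindS, hi]
  have hASones : indS ⬝ᵥ (A *ᵥ ones) = d * s := by
    rw [hones, dotProduct_smul, hSones, smul_eq_mul]
  have hAonesT : ones ⬝ᵥ (A *ᵥ indT) = d * t := by
    rw [Matrix.dotProduct_mulVec, ← Matrix.mulVec_transpose, hsymm, hones,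
      smul_dotProduct,
      show ones ⬝ᵥ indT = t from (dotProduct_comm _ _).trans hTones, smul_eq_mul]
  have hAonesones : ones ⬝ᵥ (A *ᵥ ones) = d * n := by
    rw [hones, dotProduct_smul, honesones, smul_eq_mul]
  -- the centred vectors
  set xS : Fin n → ℝ := indS - (s / n) • ones with hxS
  set yT : Fin n → ℝ := indT - (t / n) • ones with hyT
  have hxones : xS ⬝ᵥ ones = 0 := by
    rw [hxS, sub_dotProduct, smul_dotProduct, hSones, honesones, smul_eq_mul]
    field_simp
    ring
  have hyones : yT ⬝ᵥ ones = 0 := by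
    rw [hyT, sub_dotProduct, smul_dotProduct, hTones, honesones, smul_eq_mul]
    field_simp
    ring
  have hxAy : xS ⬝ᵥ (A *ᵥ yT) = - (d * s * t / n) := by
    rw [hxS, hyT, Matrix.mulVec_sub, Matrix.mulVec_smul]
    rw [sub_dotProduct, smul_dotProduct]
    rw [dotProduct_sub, dotProduct_sub, dotProduct_smul,
      dotProduct_smul]
    rw [hAST, hASones, hAonesT, hAonesones]
    simp only [smul_eq_mul]
    field_simp
    ring
  have hxx : xS ⬝ᵥ xS = s - s ^ 2 / n := by
    rw [hxS, sub_dotProduct, dotProduct_sub, dotProduct_sub,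
      smul_dotProduct, dotProduct_smul, dotProduct_smul,
      smul_dotProduct]
    rw [hSS, hSones, honesones]
    simp only [smul_eq_mul]
    have hcomm : ones ⬝ᵥ indS = s := by
      rw [dotProduct_comm]
      exact hSones
    rw [hcomm]
    field_simp
    ring
  have hyy : yT ⬝ᵥ yT = t - t ^ 2 / n := by
    rw [hyT, sub_dotProduct, dotProduct_sub, dotProduct_sub,
      smul_dotProduct, dotProduct_smul, dotProduct_smul,
      smul_dotProduct]
    rw [hTT, hTones, honesones]
    simp only [smul_eq_mul]
    have hcomm : ones ⬝ᵥ indT = t := by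
      rw [dotProduct_comm]
      exact hTones
    rw [hcomm]
    field_simp
    ring
  have hfin := key xS yT hxones hyones
  rw [hxAy, hxx, hyy] at hfin
  exact eml_arith (d:ℝ) s t (n:ℝ) lam hnR hs0 ht0 hsn htn hfin

end EML

section MainArith

lemma key_arith (dR kR nR lamR a b : ℝ) (hlam0 : 0 ≤ lamR) (hd : 0 < dR) (hk0 : 0 ≤ kR)
    (hn2 : 2 ≤ nR) (hkn : kR ≤ nR) (hab : a + b = kR + 1) (ha : kR ≤ 2 * a) (hb' : kR ≤ 2 * b)
    (ha0 : 0 ≤ a) (hb0 : 0 ≤ b)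
    (hEML : dR ^ 2 * a * b ≤ lamR ^ 2 * (nR - a) * (nR - b)) :
    dR * kR ≤ lamR * (2 * nR - kR - 1) := by
  have h1 : kR * kR ≤ (2 * a) * (2 * b) := mul_le_mul ha hb' hk0 (by linarith)
  have h2 : dR ^ 2 * (kR * kR) ≤ dR ^ 2 * ((2 * a) * (2 * b)) :=
    mul_le_mul_of_nonneg_left h1 (sq_nonneg _)
  have h3 : lamR ^ 2 * (4 * ((nR - a) * (nR - b))) ≤ lamR ^ 2 * (2 * nR - kR - 1) ^ 2 := by
    have h4 : 4 * ((nR - a) * (nR - b)) ≤ (2 * nR - kR - 1) ^ 2 := by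
      nlinarith [sq_nonneg ((nR - a) - (nR - b))]
    exact mul_le_mul_of_nonneg_left h4 (sq_nonneg _)
  have h5 : (dR * kR) ^ 2 ≤ (lamR * (2 * nR - kR - 1)) ^ 2 := by nlinarith [hEML]
  have h6 : 0 ≤ lamR * (2 * nR - kR - 1) := mul_nonneg hlam0 (by linarith)
  nlinarith [h5, h6, mul_nonneg (mul_nonneg hd.le hk0) h6]

lemma final_arith (dR nR lamR bR kR : ℝ) (hd : 0 < dR) (hlam0 : 0 ≤ lamR)
    (hn2 : 2 ≤ nR) (hkn : kR ≤ nR) (hk0 : 0 ≤ kR) (hbk : bR + kR = nR)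
    (hkey : dR * kR ≤ lamR * (2 * nR - kR - 1)) :
    max (1 - 2 * lamR / dR) ((dR - lamR) / (dR + 3 * lamR)) * nR ≤ bR := by
  have hkd : kR ≤ 2 * lamR * nR / dR := by
    rw [le_div_iff₀ hd]
    nlinarith [mul_nonneg hlam0 (by linarith : (0:ℝ) ≤ kR + 1)]
  have g1 : (1 - 2 * lamR / dR) * nR ≤ bR := by
    have he : (1 - 2 * lamR / dR) * nR = nR - 2 * lamR * nR / dR := by
      field_simp
    rw [he]
    linarith
  have g2 : (dR - lamR) / (dR + 3 * lamR) * nR ≤ bR := by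
    rw [div_mul_eq_mul_div, div_le_iff₀ (by linarith)]
    nlinarith [hkey, mul_le_mul_of_nonneg_left hkn hlam0]
  rcases max_choice (1 - 2 * lamR / dR) ((dR - lamR) / (dR + 3 * lamR)) with h | h <;> rw [h]
  · exact g1
  · exact g2

end MainArith


/-- `|E(S,T)|`: the number of pairs `(s, t) ∈ S × T` with `s` adjacent to `t`; this counts
every edge between `S \ T` and `T` once and every edge inside `S ∩ T` twice. -/
noncomputable def edgeCount {V : Type*} (G : SimpleGraph V) (S T : Finset V) : ℕ :=
  ∑ s ∈ S, ∑ t ∈ T, if G.Adj s t then 1 else 0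

/-- For a $d$-regular graph $G$ on $n$ vertices with
$\lambda = \lambda(G)$,
$H(G) \ge \max\left(1-\frac{2\lambda}{d}, \frac{d-\lambda}{d+3\lambda}\right) n
 = \left(1 - \min\left(\frac{2\lambda}{d}, \frac{4\lambda}{d+3\lambda}\right)\right) n$. -/
theorem hopNumber_lower_of_expansion {n d : ℕ} (hn : 2 ≤ n) (G : SimpleGraph (Fin n))
    (hreg : G.IsRegularOfDegree d) :
    max (1 - 2 * graphLambda G / d)
        (((d : ℝ) - graphLambda G) / ((d : ℝ) + 3 * graphLambda G)) * n
      ≤ (hopNumber G : ℝ) ∧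
    (1 - min (2 * graphLambda G / d)
        (4 * graphLambda G / ((d : ℝ) + 3 * graphLambda G))) * n
      ≤ (hopNumber G : ℝ) := by
  have hlam0 : 0 ≤ graphLambda G := graphLambda_nonneg G hn
  set lam := graphLambda G with hlamdef
  have hnR : (2:ℝ) ≤ (n:ℝ) := by exact_mod_cast hn
  have hne : {k | ∃ B : Finset (Fin n), B.card = k ∧ HopFeasible G B}.Nonempty :=
    ⟨(Finset.univ : Finset (Fin n)).card, Finset.univ, rfl, ⟨∅, Relation.ReflTransGen.refl⟩⟩
  obtain ⟨B, hBcard, hBfeas⟩ := Nat.sInf_mem hne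
  have hBH : ((B.card : ℕ) : ℝ) = (hopNumber G : ℝ) := congrArg (Nat.cast : ℕ → ℝ) hBcard
  obtain ⟨HH, hchain⟩ := hBfeas
  obtain ⟨k, hk, v, u, hpair, hvinj, huinj, huB, hvD⟩ := hop_chain_struct G hchain
  rw [Fintype.card_fin] at hk
  have hkn : k ≤ n := by omega
  have hbkR : ((B.card : ℕ) : ℝ) + (k : ℝ) = (n : ℝ) := by exact_mod_cast hk
  by_cases hd0 : d = 0
  · subst hd0
    have hG : ∀ a b : Fin n, ¬ G.Adj a b := by
      intro a b hab
      have h1 : b ∈ G.neighborFinset a := (SimpleGraph.mem_neighborFinset _ _ _).mpr hab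
      have h3 : G.neighborFinset a = ∅ := Finset.card_eq_zero.mp (hreg a)
      rw [h3] at h1
      exact absurd h1 (Finset.notMem_empty b)
    have hnostep : ∀ q, ¬ HopStep G (B, ∅) q := by
      rintro q ⟨v₀, w₀, -, -, -, -, hdist, -⟩
      have h2 : G.dist v₀ w₀ ≠ 0 := by omega
      obtain ⟨pw, hpw⟩ := SimpleGraph.exists_walk_of_dist_ne_zero h2
      cases pw with
      | nil => rw [SimpleGraph.dist_self] at hdist; omega
      | cons h p => exact hG _ _ h
    have hBuniv : (Finset.univ, HH) = (B, (∅ : Finset (Fin n))) :=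
      (Relation.reflTransGen_iff_eq hnostep).mp hchain
    have hBn : ((B.card : ℕ) : ℝ) = (n : ℝ) := by
      have hBu : B = Finset.univ := (congrArg Prod.fst hBuniv).symm
      rw [hBu]
      simp
    have hHn : (n : ℝ) ≤ (hopNumber G : ℝ) := by rw [← hBH, hBn]
    constructor
    · simp only [Nat.cast_zero, div_zero, sub_zero, zero_sub, zero_add]
      have h2 : -lam / (3 * lam) ≤ 1 := by
        rcases hlam0.lt_or_eq with h | h
        · rw [div_le_one (by linarith)]
          linarith
        · rw [← h]
          norm_num
      rw [max_eq_left h2, one_mul]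
      exact hHn
    · simp only [Nat.cast_zero, div_zero, zero_add]
      have h3 : (0:ℝ) ≤ 4 * lam / (3 * lam) :=
        div_nonneg (by linarith) (by linarith)
      rw [min_eq_left h3, sub_zero, one_mul]
      exact hHn
  · have hd1 : (0:ℝ) < (d : ℝ) := by exact_mod_cast Nat.pos_of_ne_zero hd0
    by_cases hld : lam < (d : ℝ)
    · -- main case
      have hkey : (d : ℝ) * k ≤ lam * (2 * n - k - 1) := by
        rcases Nat.eq_zero_or_pos k with hk0 | hk1
        · subst hk0
          have h9 : (0:ℝ) ≤ lam * (2 * n - (0:ℕ) - 1) := mul_nonneg hlam0 (by push_cast; linarith)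
          push_cast
          push_cast at h9
          linarith
        · have hsh1 : 1 ≤ (k+1)/2 := by omega
          have hsh2 : (k+1)/2 ≤ k := by omega
          set sh := (k+1)/2 with hshdef
          set S : Finset (Fin n) :=
            Finset.image (fun i : Fin sh => v (Fin.castLE hsh2 i)) Finset.univ with hSdef
          set T : Finset (Fin n) :=
            Finset.image (fun j : Fin (k+1-sh) =>
              u (⟨(j:ℕ) + (sh - 1), by have := j.2; omega⟩ : Fin k)) Finset.univ with hTdef
          have hSinj : Function.Injective (fun i : Fin sh => v (Fin.castLE hsh2 i)) :=
            fun a b hab => Fin.castLE_injective _ (hvinj hab)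
          have hScard : S.card = sh := by
            rw [hSdef, Finset.card_image_of_injective _ hSinj]
            simp
          have hTinj : Function.Injective (fun j : Fin (k+1-sh) =>
              u (⟨(j:ℕ) + (sh - 1), by have := j.2; omega⟩ : Fin k)) := by
            intro a b hab
            have h1 := huinj hab
            have h2 := congrArg Fin.val h1
            simp only [Fin.val_mk] at h2
            exact Fin.ext (by omega)
          have hTcard : T.card = k + 1 - sh := by
            rw [hTdef, Finset.card_image_of_injective _ hTinj]
            simp
          have hEe : ∀ a ∈ S, ∀ b ∈ T, ¬ G.Adj a b := by
            intro a ha b hb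
            rw [hSdef] at ha
            rw [hTdef] at hb
            obtain ⟨i, -, rfl⟩ := Finset.mem_image.mp ha
            obtain ⟨j, -, rfl⟩ := Finset.mem_image.mp hb
            refine (hpair _ _ ?_).1
            rw [Fin.le_def]
            simp only [Fin.coe_castLE, Fin.val_mk]
            have := i.2
            omega
          have hEML := eml G hn hreg hld S T hEe
          rw [hScard, hTcard] at hEML
          have hna : (sh:ℝ) + ((k+1-sh : ℕ):ℝ) = (k:ℝ) + 1 := by
            have h9 : sh + (k+1-sh) = k+1 := by omega
            exact_mod_cast h9
          have haR : (k:ℝ) ≤ 2 * (sh:ℝ) := by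
            have h9 : k ≤ 2 * sh := by omega
            exact_mod_cast h9
          have hbR : (k:ℝ) ≤ 2 * ((k+1-sh : ℕ):ℝ) := by
            have h9 : k ≤ 2 * (k+1-sh) := by omega
            exact_mod_cast h9
          exact key_arith (d:ℝ) (k:ℝ) (n:ℝ) lam (sh:ℝ) ((k+1-sh : ℕ):ℝ) hlam0 hd1
            (Nat.cast_nonneg _) hnR (by exact_mod_cast hkn) hna haR hbR
            (Nat.cast_nonneg _) (Nat.cast_nonneg _) hEML
      have hconj1 : max (1 - 2 * lam / (d:ℝ)) (((d:ℝ) - lam) / ((d:ℝ) + 3 * lam)) * n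
          ≤ (hopNumber G : ℝ) := by
        rw [← hBH]
        exact final_arith (d:ℝ) (n:ℝ) lam ((B.card : ℕ):ℝ) (k:ℝ) hd1 hlam0 hnR
          (by exact_mod_cast hkn) (Nat.cast_nonneg _) hbkR hkey
      refine ⟨hconj1, ?_⟩
      have hden : (0:ℝ) < (d:ℝ) + 3 * lam := by linarith
      have h1 : (1:ℝ) - 4 * lam / ((d:ℝ) + 3 * lam) = ((d:ℝ) - lam) / ((d:ℝ) + 3 * lam) := by
        field_simp
        ring
      have hrw : (1:ℝ) - min (2 * lam / (d:ℝ)) (4 * lam / ((d:ℝ) + 3 * lam))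
          = max (1 - 2 * lam / (d:ℝ)) (((d:ℝ) - lam) / ((d:ℝ) + 3 * lam)) := by
        rcases le_total (2 * lam / (d:ℝ)) (4 * lam / ((d:ℝ) + 3 * lam)) with h | h
        · rw [min_eq_left h, max_eq_left (by rw [← h1]; linarith)]
        · rw [min_eq_right h, max_eq_right (by rw [← h1]; linarith), h1]
      rw [hrw]
      exact hconj1
    · push_neg at hld
      have hden : (0:ℝ) < (d:ℝ) + 3 * lam := by linarith
      have hH0 : (0:ℝ) ≤ (hopNumber G : ℝ) := Nat.cast_nonneg _
      have hn0 : (0:ℝ) ≤ (n:ℝ) := by linarith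
      constructor
      · have h1 : 1 - 2 * lam / (d:ℝ) ≤ 0 := by
          have h9 : (1:ℝ) ≤ 2 * lam / (d:ℝ) := by
            rw [le_div_iff₀ hd1]
            linarith
          linarith
        have h2 : ((d:ℝ) - lam) / ((d:ℝ) + 3 * lam) ≤ 0 :=
          div_nonpos_iff.mpr (Or.inr ⟨by linarith, by linarith⟩)
        calc max (1 - 2 * lam / (d:ℝ)) (((d:ℝ) - lam) / ((d:ℝ) + 3 * lam)) * n
            ≤ 0 * n := mul_le_mul_of_nonneg_right (max_le h1 h2) hn0
          _ = 0 := zero_mul _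
          _ ≤ _ := hH0
      · have h1 : (1:ℝ) ≤ 2 * lam / (d:ℝ) := by
          rw [le_div_iff₀ hd1]
          linarith
        have h2 : (1:ℝ) ≤ 4 * lam / ((d:ℝ) + 3 * lam) := by
          rw [le_div_iff₀ hden]
          linarith
        have h3 : 1 - min (2 * lam / (d:ℝ)) (4 * lam / ((d:ℝ) + 3 * lam)) ≤ 0 := by
          have h9 := le_min h1 h2
          linarith
        calc (1 - min (2 * lam / (d:ℝ)) (4 * lam / ((d:ℝ) + 3 * lam))) * n
            ≤ 0 * n := mul_le_mul_of_nonneg_right h3 hn0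
          _ = 0 := zero_mul _
          _ ≤ _ := hH0
end

section
/- Let G = (V,E) be a graph on n vertices with hopping forcing number H(G) ≤ k (and n − k even). Then V can be partitioned into sets S, T, U with |S| = |T| = (n−k)/2 and |U| = k such that there is no edge of G between S and T. -/
open scoped Classical

/-- Invariant of the hopping process. -/
def HopInv {V : Type*} [DecidableEq V] (G : SimpleGraph V) (b : ℕ)
    (p : Finset V × Finset V) : Prop :=
  p.2 ⊆ p.1 ∧ (∀ v ∈ p.2, ∀ u, G.Adj v u → u ∈ p.1) ∧ p.1.card = b + p.2.card

lemma hopInv_step {V : Type*} [DecidableEq V] {G : SimpleGraph V} {b : ℕ}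
    {p q : Finset V × Finset V} (hp : HopInv G b p) (h : HopStep G p q) :
    HopInv G b q := by
  obtain ⟨v, w, hv1, hv2, hnb, hw, _, rfl⟩ := h
  obtain ⟨h1, h2, h3⟩ := hp
  refine ⟨?_, ?_, ?_⟩
  · intro x hx
    simp only [Finset.mem_insert] at hx ⊢
    rcases hx with rfl | hx
    · exact Or.inr hv1
    · exact Or.inr (h1 hx)
  · intro x hx u hu
    simp only [Finset.mem_insert] at hx ⊢
    rcases hx with rfl | hx
    · exact Or.inr (hnb u hu)
    · exact Or.inr (h2 x hx u hu)
  · simp only []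
    rw [Finset.card_insert_of_notMem hw, Finset.card_insert_of_notMem hv2, h3]
    omega

lemma hopInv_rtg {V : Type*} [DecidableEq V] {G : SimpleGraph V} {b : ℕ}
    {p q : Finset V × Finset V} (h : Relation.ReflTransGen (HopStep G) p q)
    (hp : HopInv G b p) : HopInv G b q := by
  induction h with
  | refl => exact hp
  | tail _ hstep ih => exact hopInv_step ih hstep

lemma hop_exists_mid {V : Type*} [DecidableEq V] {G : SimpleGraph V}
    {a c : Finset V × Finset V} (h : Relation.ReflTransGen (HopStep G) a c)
    (t : ℕ) (h1 : a.2.card ≤ t) (h2 : t ≤ c.2.card) :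
    ∃ q, Relation.ReflTransGen (HopStep G) a q ∧ q.2.card = t := by
  induction h with
  | refl => exact ⟨a, Relation.ReflTransGen.refl, by omega⟩
  | @tail b c hab hbc ih =>
    obtain ⟨v, w, _, hv2, _, _, _, rfl⟩ := hbc
    simp only [Finset.card_insert_of_notMem hv2] at h2
    rcases le_or_gt t b.2.card with ht | ht
    · exact ih ht
    · refine ⟨(insert w b.1, insert v b.2), Relation.ReflTransGen.tail hab ?_, ?_⟩
      · exact ⟨v, w, by tauto⟩
      · simp only [Finset.card_insert_of_notMem hv2]; omega

/-- If $G$ is a graph on $n$ vertices with $H(G) \le k$ (and $n-k$ even),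
then $V$ can be partitioned into sets $S, T, U$ with $|S| = |T| = (n-k)/2$ and $|U| = k$
such that there is no edge between $S$ and $T$. -/
theorem partition_of_hopNumber_le {V : Type*} [Fintype V] [DecidableEq V]
    (G : SimpleGraph V) (n k : ℕ) (hn : Fintype.card V = n) (hk : k ≤ n)
    (heven : Even (n - k)) (hH : hopNumber G ≤ k) :
    ∃ S T U : Finset V,
      Disjoint S T ∧ Disjoint S U ∧ Disjoint T U ∧ S ∪ T ∪ U = Finset.univ ∧
      S.card = (n - k) / 2 ∧ T.card = (n - k) / 2 ∧ U.card = k ∧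
      ∀ s ∈ S, ∀ t ∈ T, ¬ G.Adj s t := by
  classical
  obtain ⟨m, hm⟩ := heven
  have hne : (Finset.univ : Finset V).card ∈
      {k | ∃ B : Finset V, B.card = k ∧ HopFeasible G B} :=
    ⟨Finset.univ, rfl, ⟨∅, Relation.ReflTransGen.refl⟩⟩
  have hmem : hopNumber G ∈ {k | ∃ B : Finset V, B.card = k ∧ HopFeasible G B} :=
    Nat.sInf_mem ⟨_, hne⟩
  obtain ⟨B, hBcard, Hf, hchain⟩ := hmem
  have hbk : B.card ≤ k := by rw [hBcard]; exact hH
  have base : HopInv G B.card (B, (∅ : Finset V)) :=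
    ⟨Finset.empty_subset _, by simp, by simp⟩
  have hfin := hopInv_rtg hchain base
  have hfin3 : n = B.card + Hf.card := by
    have := hfin.2.2
    simpa [hn] using this
  obtain ⟨q, hq, hqcard⟩ := hop_exists_mid hchain m (by simp) (by show m ≤ Hf.card; omega)
  have hinv := hopInv_rtg hq base
  obtain ⟨hsub, hnbr, hcard⟩ := hinv
  rw [hqcard] at hcard
  set W : Finset V := Finset.univ \ q.1 with hW
  have hWcard : W.card = n - (B.card + m) := by
    rw [hW, Finset.card_sdiff_of_subset (Finset.subset_univ _), Finset.card_univ, hn, hcard]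
  have hWm : m ≤ W.card := by omega
  obtain ⟨T, hTW, hTcard⟩ := Finset.exists_subset_card_eq hWm
  have hTnot : ∀ x ∈ T, x ∉ q.1 := by
    intro x hx
    have := hTW hx
    rw [hW, Finset.mem_sdiff] at this
    exact this.2
  refine ⟨q.2, T, (q.2 ∪ T)ᶜ, ?_, ?_, ?_, ?_, ?_, ?_, ?_, ?_⟩
  · rw [Finset.disjoint_left]
    intro x hx hxT
    exact hTnot x hxT (hsub hx)
  · rw [Finset.disjoint_left]
    intro x hx hxU
    simp only [Finset.mem_compl, Finset.mem_union] at hxU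
    exact hxU (Or.inl hx)
  · rw [Finset.disjoint_left]
    intro x hx hxU
    simp only [Finset.mem_compl, Finset.mem_union] at hxU
    exact hxU (Or.inr hx)
  · exact Finset.union_compl _
  · omega
  · omega
  · have hd : Disjoint q.2 T := by
      rw [Finset.disjoint_left]
      intro x hx hxT
      exact hTnot x hxT (hsub hx)
    have : (q.2 ∪ T)ᶜ.card = Fintype.card V - (q.2 ∪ T).card :=
      Finset.card_compl _
    rw [this, Finset.card_union_of_disjoint hd, hqcard, hTcard, hn]
    omega
  · intro s hs t ht hadj
    exact hTnot t ht (hnbr s hs t hadj)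
end

section
/- For every integer n ≥ 3, the hopping forcing number of the cycle graph C_n on n vertices equals 3. -/
open scoped Classical

section CGAux
open SimpleGraph Finset

lemma cg_adj_succ {n : ℕ} (hn : 2 ≤ n) {i j : Fin n} (h : (j : ℕ) = (i : ℕ) + 1) :
    (SimpleGraph.cycleGraph n).Adj i j := by
  rw [SimpleGraph.cycleGraph_adj']
  right
  rw [Fin.sub_def]
  have hi : (i : ℕ) < n := i.isLt
  have hj : (j : ℕ) < n := j.isLt
  have h1 : n - (i : ℕ) + (j : ℕ) = n + 1 := by omega
  simp only [h1]
  rw [Nat.add_mod_left]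
  exact Nat.mod_eq_of_lt (by omega)

lemma cg_not_adj_two {n : ℕ} (hn : 4 ≤ n) {i j : Fin n} (h : (j : ℕ) = (i : ℕ) + 2) :
    ¬ (SimpleGraph.cycleGraph n).Adj i j := by
  rw [SimpleGraph.cycleGraph_adj']
  rintro (hc | hc)
  · rw [Fin.sub_def] at hc
    simp only at hc
    have hj : (j : ℕ) < n := j.isLt
    have h1 : n - (j : ℕ) + (i : ℕ) = n - 2 := by omega
    rw [h1, Nat.mod_eq_of_lt (by omega)] at hc
    omega
  · rw [Fin.sub_def] at hc
    simp only at hc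
    have hj : (j : ℕ) < n := j.isLt
    have h1 : n - (i : ℕ) + (j : ℕ) = n + 2 := by omega
    rw [h1, Nat.add_mod_left, Nat.mod_eq_of_lt (by omega)] at hc
    omega

lemma cg_dist_two {n : ℕ} (hn : 4 ≤ n) {i j : Fin n} (h : (j : ℕ) = (i : ℕ) + 2) :
    (SimpleGraph.cycleGraph n).dist i j = 2 := by
  have hj : (j : ℕ) < n := j.isLt
  have hmid : ((i : ℕ) + 1) < n := by omega
  set m : Fin n := ⟨(i : ℕ) + 1, hmid⟩ with hm
  have ha1 : (SimpleGraph.cycleGraph n).Adj i m := cg_adj_succ (by omega) rfl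
  have ha2 : (SimpleGraph.cycleGraph n).Adj m j := cg_adj_succ (by omega) (by simp [hm, h])
  have hle : (SimpleGraph.cycleGraph n).dist i j ≤ 2 := by
    have := SimpleGraph.dist_le (SimpleGraph.Walk.cons ha1 ha2.toWalk)
    simpa using this
  have hne : i ≠ j := by
    intro hc; rw [hc] at h; omega
  have hconn : (SimpleGraph.cycleGraph n).Connected := by
    obtain ⟨m', rfl⟩ : ∃ m', n = m' + 1 := ⟨n - 1, by omega⟩
    exact SimpleGraph.cycleGraph_connected
  have hpos : 0 < (SimpleGraph.cycleGraph n).dist i j := hconn.pos_dist_of_ne hne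
  have hone : (SimpleGraph.cycleGraph n).dist i j ≠ 1 := by
    intro hc
    exact cg_not_adj_two hn h (SimpleGraph.dist_eq_one_iff_adj.mp hc)
  omega

lemma cg_neighbors {m : ℕ} {v u : Fin (m + 2)}
    (h : (SimpleGraph.cycleGraph (m + 2)).Adj v u) : u = v - 1 ∨ u = v + 1 := by
  have : u ∈ (SimpleGraph.cycleGraph (m + 2)).neighborSet v := h
  rw [SimpleGraph.cycleGraph_neighborSet] at this
  simpa using this

lemma cg_chain {n : ℕ} (hn : 4 ≤ n) (k : ℕ) (h3 : 3 ≤ k) (hk : k ≤ n) :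
    Relation.ReflTransGen (HopStep (SimpleGraph.cycleGraph n))
      (Finset.univ.filter (fun i : Fin n => (i : ℕ) < 3), ∅)
      (Finset.univ.filter (fun i : Fin n => (i : ℕ) < k),
       Finset.univ.filter (fun i : Fin n => 1 ≤ (i : ℕ) ∧ (i : ℕ) + 3 ≤ k)) := by
  induction k with
  | zero => omega
  | succ k ih =>
    rcases Nat.lt_or_ge k 3 with hlt | hge
    · have hB : (Finset.univ.filter (fun i : Fin n => (i : ℕ) < 3))
          = Finset.univ.filter (fun i : Fin n => (i : ℕ) < k + 1) := by
        ext i; simp; omega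
      have hH : (∅ : Finset (Fin n))
          = Finset.univ.filter (fun i : Fin n => 1 ≤ (i : ℕ) ∧ (i : ℕ) + 3 ≤ k + 1) := by
        ext i; simp; omega
      rw [← hB, ← hH]
    · refine (ih hge (by omega)).tail ?_
      have hkn : k < n := by omega
      refine ⟨⟨k - 2, by omega⟩, ⟨k, hkn⟩, ?_, ?_, ?_, ?_, ?_, ?_⟩
      · simp; omega
      · simp; omega
      · intro u hu
        obtain ⟨m, hm⟩ : ∃ m, n = m + 2 := ⟨n - 2, by omega⟩
        subst hm
        rcases cg_neighbors hu with h | h <;> subst h <;>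
          simp only [Finset.mem_filter, Finset.mem_univ, true_and]
        · rw [Fin.coe_sub_one]
          split_ifs with h0
          · exfalso
            rw [Fin.ext_iff] at h0
            simp at h0
            omega
          · simp; omega
        · rw [Fin.val_add_one]
          split_ifs with h0
          · omega
          · rw [Fin.ext_iff] at h0
            simp [Fin.last] at h0
            simp
            omega
      · simp
      · exact cg_dist_two hn (by simp; omega)
      · refine Prod.ext ?_ ?_ <;> dsimp <;> ext i <;>
          simp [Fin.ext_iff] <;> omega

lemma cg_adj_pred' {m : ℕ} (v : Fin (m + 2)) :
    (SimpleGraph.cycleGraph (m + 2)).Adj v (v - 1) := by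
  have : (v - 1) ∈ (SimpleGraph.cycleGraph (m + 2)).neighborSet v := by
    rw [SimpleGraph.cycleGraph_neighborSet]; left; rfl
  exact this

lemma cg_adj_succ' {m : ℕ} (v : Fin (m + 2)) :
    (SimpleGraph.cycleGraph (m + 2)).Adj v (v + 1) := by
  have : (v + 1) ∈ (SimpleGraph.cycleGraph (m + 2)).neighborSet v := by
    rw [SimpleGraph.cycleGraph_neighborSet]; right; rfl
  exact this

lemma cg_lower {n : ℕ} (hn : 3 ≤ n) (B : Finset (Fin n))
    (hf : HopFeasible (SimpleGraph.cycleGraph n) B) : 3 ≤ B.card := by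
  obtain ⟨H, hrel⟩ := hf
  rcases hrel.cases_head with heq | ⟨c, hstep, -⟩
  · have hB : B = Finset.univ := congrArg Prod.fst heq
    rw [hB, Finset.card_univ, Fintype.card_fin]
    exact hn
  · obtain ⟨v, w, hvB, -, hnb, -, -, -⟩ := hstep
    obtain ⟨m, rfl⟩ : ∃ m, n = m + 2 := ⟨n - 2, by omega⟩
    have hm : 1 ≤ m := by omega
    have h1 : v - 1 ∈ B := hnb _ (cg_adj_pred' v)
    have h2 : v + 1 ∈ B := hnb _ (cg_adj_succ' v)
    have e1 : v - 1 ≠ v := fun h => ((cg_adj_pred' v).ne' h).elim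
    have e2 : v + 1 ≠ v := fun h => ((cg_adj_succ' v).ne' h).elim
    have e3 : v - 1 ≠ v + 1 := by
      intro h
      rw [Fin.ext_iff, Fin.coe_sub_one, Fin.val_add_one] at h
      simp only [Fin.ext_iff, Fin.val_zero, Fin.val_last] at h
      have hv : (v : ℕ) < m + 2 := v.isLt
      split_ifs at h <;> omega
    have hsub : ({v - 1, v, v + 1} : Finset (Fin (m + 2))) ⊆ B := by
      intro x hx
      simp only [Finset.mem_insert, Finset.mem_singleton] at hx
      rcases hx with rfl | rfl | rfl <;> assumption
    have hcard : ({v - 1, v, v + 1} : Finset (Fin (m + 2))).card = 3 := by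
      rw [Finset.card_insert_of_notMem (by simp [e1, e3]),
        Finset.card_insert_of_notMem (by simp [e2.symm]), Finset.card_singleton]
    calc 3 = ({v - 1, v, v + 1} : Finset (Fin (m + 2))).card := hcard.symm
      _ ≤ B.card := Finset.card_le_card hsub


end CGAux

/-- For every integer $n \ge 3$, the hopping forcing number of the cycle
$C_n$ equals $3$. -/
theorem hopNumber_cycleGraph (n : ℕ) (hn : 3 ≤ n) :
    hopNumber (SimpleGraph.cycleGraph n) = 3 := by
  have hcard : (Finset.univ.filter (fun i : Fin n => (i : ℕ) < 3)).card = 3 := by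
    have h012 : (Finset.univ.filter (fun i : Fin n => (i : ℕ) < 3))
        = ({⟨0, by omega⟩, ⟨1, by omega⟩, ⟨2, by omega⟩} : Finset (Fin n)) := by
      ext i; simp [Fin.ext_iff]; omega
    rw [h012, Finset.card_insert_of_notMem (by simp [Fin.ext_iff]),
      Finset.card_insert_of_notMem (by simp [Fin.ext_iff]), Finset.card_singleton]
  have hfeas : HopFeasible (SimpleGraph.cycleGraph n)
      (Finset.univ.filter (fun i : Fin n => (i : ℕ) < 3)) := by
    rcases Nat.lt_or_ge n 4 with h4 | h4
    · refine ⟨∅, ?_⟩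
      have : (Finset.univ.filter (fun i : Fin n => (i : ℕ) < 3)) = (Finset.univ : Finset (Fin n)) := by
        ext i; simp; omega
      rw [this]
    · have := cg_chain h4 n (by omega) le_rfl
      have huniv : (Finset.univ.filter (fun i : Fin n => (i : ℕ) < n)) = (Finset.univ : Finset (Fin n)) := by
        ext i; simp
      rw [huniv] at this
      exact ⟨_, this⟩
  have hmem : 3 ∈ {k | ∃ B : Finset (Fin n), B.card = k ∧ HopFeasible (SimpleGraph.cycleGraph n) B} :=
    ⟨_, hcard, hfeas⟩
  refine le_antisymm (Nat.sInf_le hmem) ?_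
  have hsm := Nat.sInf_mem (⟨3, hmem⟩ : Set.Nonempty _)
  obtain ⟨B, hB, hf⟩ := hsm
  rw [hopNumber]
  rw [← hB]
  exact cg_lower hn B hf
end

section
/- The constant c_d = (d−1)!·(d−2)^{d−1} / ∏_{i=1}^{d−1}(i(d−2)+1) satisfies c_d = 1 − Θ(log d / d) as d → ∞; that is, there exist constants c₁, c₂ > 0 and an integer d₀ ≥ 3 such that for all integers d ≥ d₀, 1 − c₂·(log d)/d ≤ c_d ≤ 1 − c₁·(log d)/d. In particular c_d → 1 as d → ∞. -/
open Finset Real Filter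

/-- The constant $c_d = \frac{(d-1)!\,(d-2)^{d-1}}{\prod_{i=1}^{d-1}(i(d-2)+1)}$. -/
noncomputable def cConst (d : ℕ) : ℝ :=
  (Nat.factorial (d - 1) : ℝ) * ((d : ℝ) - 2) ^ (d - 1) /
    ∏ i ∈ Finset.Icc 1 (d - 1), ((i : ℝ) * ((d : ℝ) - 2) + 1)

lemma weier (s : Finset ℕ) (f : ℕ → ℝ) (h0 : ∀ i ∈ s, 0 ≤ f i) (h1 : ∀ i ∈ s, f i ≤ 1) :
    1 - ∑ i ∈ s, f i ≤ ∏ i ∈ s, (1 - f i) := by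
  induction s using Finset.cons_induction with
  | empty => simp
  | cons a s ha ih =>
    rw [Finset.prod_cons, Finset.sum_cons]
    have h0a := h0 a (Finset.mem_cons_self _ _)
    have h1a := h1 a (Finset.mem_cons_self _ _)
    have ih' := ih (fun i hi => h0 i (Finset.mem_cons.2 (Or.inr hi)))
      (fun i hi => h1 i (Finset.mem_cons.2 (Or.inr hi)))
    have hs : (0:ℝ) ≤ ∑ i ∈ s, f i :=
      Finset.sum_nonneg (fun i hi => h0 i (Finset.mem_cons.2 (Or.inr hi)))
    have key : (1 - f a) * (1 - ∑ i ∈ s, f i) ≤ (1 - f a) * ∏ i ∈ s, (1 - f i) :=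
      mul_le_mul_of_nonneg_left ih' (by linarith)
    nlinarith

lemma cConst_prod (d : ℕ) (hd : 3 ≤ d) :
    cConst d = ∏ i ∈ Finset.Icc 1 (d-1), (1 - 1/((i:ℝ) * ((d:ℝ)-2) + 1)) := by
  have ht : (1:ℝ) ≤ (d:ℝ) - 2 := by
    have : (3:ℝ) ≤ (d:ℝ) := by exact_mod_cast hd
    linarith
  have hnum : (Nat.factorial (d - 1) : ℝ) * ((d : ℝ) - 2) ^ (d - 1)
      = ∏ i ∈ Finset.Icc 1 (d-1), ((i:ℝ) * ((d:ℝ)-2)) := by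
    rw [Finset.prod_mul_distrib, Finset.prod_const, Nat.card_Icc]
    simp only [Nat.add_sub_cancel]
    congr 1
    rw [← Nat.cast_prod]
    congr 1
    rw [← Finset.prod_Ico_id_eq_factorial, Finset.Ico_add_one_right_eq_Icc]
  rw [cConst, hnum, ← Finset.prod_div_distrib]
  refine Finset.prod_congr rfl (fun i hi => ?_)
  have hi1 : 1 ≤ i := (Finset.mem_Icc.mp hi).1
  have hipos : (1:ℝ) ≤ (i:ℝ) := by exact_mod_cast hi1
  have hpos : 0 < (i:ℝ) * ((d:ℝ)-2) + 1 := by nlinarith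
  field_simp
  ring

lemma main_bounds (d : ℕ) (hd : 16 ≤ d) :
    1 - 3 * Real.log d / d ≤ cConst d ∧ cConst d ≤ 1 - (1/2) * Real.log d / d := by
  have hd3 : 3 ≤ d := by omega
  have hdR : (16:ℝ) ≤ (d:ℝ) := by exact_mod_cast hd
  set t : ℝ := (d:ℝ) - 2 with htdef
  have ht : (14:ℝ) ≤ t := by rw [htdef]; linarith
  set n : ℕ := d - 1 with hndef
  have hnR : (n:ℝ) = (d:ℝ) - 1 := by
    rw [hndef, Nat.cast_sub (by omega), Nat.cast_one]
  set x : ℕ → ℝ := fun i => 1/((i:ℝ) * t + 1) with hxdef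
  set S : ℝ := ∑ i ∈ Finset.Icc 1 n, x i with hSdef
  have hxpos : ∀ i ∈ Finset.Icc 1 n, 0 < (i:ℝ) * t + 1 := by
    intro i hi
    have : (1:ℝ) ≤ (i:ℝ) := by exact_mod_cast (Finset.mem_Icc.mp hi).1
    nlinarith
  have hx0 : ∀ i ∈ Finset.Icc 1 n, 0 ≤ x i := by
    intro i hi
    exact le_of_lt (div_pos one_pos (hxpos i hi))
  have hx1 : ∀ i ∈ Finset.Icc 1 n, x i ≤ 1 := by
    intro i hi
    show 1/((i:ℝ) * t + 1) ≤ 1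
    rw [div_le_one (hxpos i hi)]
    have : (1:ℝ) ≤ (i:ℝ) := by exact_mod_cast (Finset.mem_Icc.mp hi).1
    nlinarith
  have hS0 : 0 ≤ S := Finset.sum_nonneg hx0
  set H : ℝ := ((harmonic n : ℚ) : ℝ) with hHdef
  have hH : H = ∑ i ∈ Finset.Icc 1 n, ((i:ℝ))⁻¹ := by
    rw [hHdef, harmonic_eq_sum_Icc]
    push_cast
    rfl
  set L : ℝ := Real.log d with hLdef
  have hL1 : 1 ≤ L := by
    rw [hLdef, Real.le_log_iff_exp_le (by linarith)]
    have := Real.exp_one_lt_d9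
    linarith
  have hL0 : 0 ≤ L := by linarith
  have hHlow : L ≤ H := by
    have h := log_add_one_le_harmonic n
    have hcast : ((n:ℝ) + 1) = (d:ℝ) := by rw [hnR]; ring
    rw [hLdef, ← hcast, hHdef]
    convert h using 2
    push_cast
    ring
  have hHup : H ≤ 1 + L := by
    have h1 := harmonic_le_one_add_log n
    have hlog : Real.log n ≤ L := by
      rw [hLdef]
      exact Real.log_le_log (by rw [hnR]; linarith) (by rw [hnR]; linarith)
    calc H ≤ 1 + Real.log n := h1
      _ ≤ 1 + L := by linarith
  have hSup : S ≤ H / t := by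
    rw [hSdef, hH, Finset.sum_div]
    apply Finset.sum_le_sum
    intro i hi
    have hi1 : (1:ℝ) ≤ (i:ℝ) := by exact_mod_cast (Finset.mem_Icc.mp hi).1
    have h1 : (0:ℝ) < (i:ℝ) * t := by nlinarith
    calc x i = 1/((i:ℝ)*t+1) := rfl
      _ ≤ 1/((i:ℝ)*t) := one_div_le_one_div_of_le h1 (by linarith)
      _ = (i:ℝ)⁻¹ / t := by rw [one_div, mul_inv, div_eq_mul_inv]
  have hSlow : H / ((d:ℝ) - 1) ≤ S := by
    rw [hSdef, hH, Finset.sum_div]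
    apply Finset.sum_le_sum
    intro i hi
    have hi1 : (1:ℝ) ≤ (i:ℝ) := by exact_mod_cast (Finset.mem_Icc.mp hi).1
    calc (i:ℝ)⁻¹ / ((d:ℝ)-1) = 1/((i:ℝ) * ((d:ℝ)-1)) := by
          rw [one_div, mul_inv, div_eq_mul_inv]
      _ ≤ 1/((i:ℝ)*t+1) := by
          apply one_div_le_one_div_of_le (hxpos i hi)
          rw [htdef]; nlinarith
      _ = x i := rfl
  -- S ≤ 2L/t
  have hS2 : S ≤ 2 * L / t := by
    calc S ≤ H / t := hSup
      _ ≤ (2 * L) / t := by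
          gcongr <;> linarith
  -- S ≤ 3L/d
  have hS3 : S ≤ 3 * L / (d:ℝ) := by
    refine hS2.trans ?_
    rw [div_le_div_iff₀ (by linarith) (by linarith)]
    nlinarith
  -- S ≤ 1
  have hS1 : S ≤ 1 := by
    have hdpos : (0:ℝ) < (d:ℝ) := by linarith
    set u : ℝ := Real.sqrt d with hudef
    have hu2 : u ^ 2 = (d:ℝ) := Real.sq_sqrt (le_of_lt hdpos)
    have hu4 : (4:ℝ) ≤ u := by
      rw [hudef, show (4:ℝ) = Real.sqrt 16 by
        rw [show (16:ℝ) = 4^2 by norm_num, Real.sqrt_sq (by norm_num)]]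
      exact Real.sqrt_le_sqrt hdR
    have hlogu : Real.log u ≤ u - 1 := Real.log_le_sub_one_of_pos (by linarith)
    have hL2 : L = 2 * Real.log u := by
      rw [hLdef, hudef, Real.log_sqrt (le_of_lt hdpos)]; ring
    have h2Lt : 2 * L ≤ t := by
      rw [htdef, ← hu2, hL2]; nlinarith
    refine hS2.trans ?_
    rw [div_le_one (by linarith)]
    linarith
  -- L/d ≤ S
  have hSlow2 : L / (d:ℝ) ≤ S := by
    refine le_trans ?_ hSlow
    gcongr <;> linarith
  -- product form
  have hprod : cConst d = ∏ i ∈ Finset.Icc 1 n, (1 - x i) := by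
    rw [cConst_prod d hd3]
  clear_value t x S H L
  -- lower bound
  constructor
  · have hw := weier (Finset.Icc 1 n) x hx0 hx1
    rw [← hSdef] at hw
    have : 1 - 3 * L / (d:ℝ) ≤ 1 - S := by linarith
    rw [hprod]
    linarith
  -- upper bound
  · have hexp : cConst d ≤ Real.exp (-S) := by
      rw [hprod]
      calc ∏ i ∈ Finset.Icc 1 n, (1 - x i)
          ≤ ∏ i ∈ Finset.Icc 1 n, Real.exp (-x i) := by
            apply Finset.prod_le_prod
            · intro i hi; have := hx1 i hi; linarith
            · intro i hi; have := Real.add_one_le_exp (-x i); linarith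
        _ = Real.exp (∑ i ∈ Finset.Icc 1 n, -(x i)) := (Real.exp_sum _ _).symm
        _ = Real.exp (-S) := by rw [Finset.sum_neg_distrib, ← hSdef]
    have h1S : Real.exp (-S) ≤ 1/(1+S) := by
      rw [Real.exp_neg, one_div]
      exact inv_anti₀ (by linarith) (by linarith [Real.add_one_le_exp S])
    have h2 : 1/(1+S) ≤ 1 - S/2 := by
      rw [div_le_iff₀ (by linarith)]
      nlinarith
    have h3 : (1/2:ℝ) * L / (d:ℝ) ≤ S / 2 := by
      have : (1/2:ℝ) * L / (d:ℝ) = (L / (d:ℝ)) / 2 := by ring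
      rw [this]
      linarith
    calc cConst d ≤ Real.exp (-S) := hexp
      _ ≤ 1/(1+S) := h1S
      _ ≤ 1 - S/2 := h2
      _ ≤ 1 - (1/2) * L / (d:ℝ) := by linarith

/-- $c_d = 1 - \Theta(\log d / d)$ as $d \to \infty$: there are constants
$c_1, c_2 > 0$ and an integer $d_0 \ge 3$ such that
$1 - c_2 \log d / d \le c_d \le 1 - c_1 \log d / d$ for all $d \ge d_0$; in particular
$c_d \to 1$ as $d \to \infty$. -/
theorem cConst_asymptotics :
    (∃ c₁ c₂ : ℝ, 0 < c₁ ∧ 0 < c₂ ∧ ∃ d₀ : ℕ, 3 ≤ d₀ ∧ ∀ d : ℕ, d₀ ≤ d →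
      1 - c₂ * Real.log d / d ≤ cConst d ∧ cConst d ≤ 1 - c₁ * Real.log d / d) ∧
    Filter.Tendsto cConst Filter.atTop (nhds 1) := by
  constructor
  · exact ⟨1/2, 3, by norm_num, by norm_num, 16, by norm_num,
      fun d hd => ⟨(main_bounds d hd).1, (main_bounds d hd).2⟩⟩
  · have h0 : Tendsto (fun d : ℕ => Real.log d / d) atTop (nhds 0) :=
      (Real.isLittleO_log_id_atTop.tendsto_div_nhds_zero).comp tendsto_natCast_atTop_atTop
    have hg : Tendsto (fun d : ℕ => 1 - 3 * Real.log d / d) atTop (nhds 1) := by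
      have h1 := tendsto_const_nhds (x := (1:ℝ)) (f := atTop (α := ℕ)) |>.sub (h0.const_mul 3)
      simpa [mul_div_assoc] using h1
    apply tendsto_of_tendsto_of_tendsto_of_le_of_le' hg tendsto_const_nhds
    · filter_upwards [eventually_ge_atTop 16] with d hd
      exact (main_bounds d hd).1
    · filter_upwards [eventually_ge_atTop 16] with d hd
      have h := (main_bounds d hd).2
      have hdR : (16:ℝ) ≤ (d:ℝ) := by exact_mod_cast hd
      have hL0 : 0 ≤ Real.log d := Real.log_nonneg (by linarith)
      have : 0 ≤ (1/2) * Real.log d / (d:ℝ) := by positivity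
      linarith
end
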